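/- Let ε, α, L > 0, let w* ∈ ℝ^d, and let g : ℝ^d → ℝ^d be L-Lipschitz with g(w*) = 0. If w ∈ ℝ^d satisfies ‖w − w*‖ ≤ (ε/(αL + ε))·min_j |w*_j|, then for every coordinate j ∈ {1,…,d} the SGD update is relatively small: α·|g(w)_j| ≤ ε·|w_j|. -/
import Mathlib


open scoped RealInnerProductSpace BigOperators

lemma abs_coord_le_norm' {d : ℕ} (x : EuclideanSpace ℝ (Fin d)) (j : Fin d) :
    |x j| ≤ ‖x‖ := by
  rw [EuclideanSpace.norm_eq]
  have h : |x j| = Real.sqrt (‖x j‖ ^ 2) := by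
    rw [Real.norm_eq_abs, Real.sqrt_sq_eq_abs, abs_abs]
  rw [h]
  apply Real.sqrt_le_sqrt
  exact Finset.single_le_sum (f := fun i => ‖x i‖ ^ 2)
    (fun i _ => sq_nonneg _) (Finset.mem_univ j)

/-- Near the optimum, each coordinate of the SGD update is relatively small
compared to the corresponding weight coordinate. -/
theorem update_relatively_small
    {d : ℕ} (hd : 0 < d) (ε α L : ℝ) (hε : 0 < ε) (hα : 0 < α) (hL : 0 < L)
    (wstar : EuclideanSpace ℝ (Fin d))
    (g : EuclideanSpace ℝ (Fin d) → EuclideanSpace ℝ (Fin d))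
    (hg : ∀ u v, ‖g u - g v‖ ≤ L * ‖u - v‖)
    (hgstar : g wstar = 0)
    (w : EuclideanSpace ℝ (Fin d))
    (hdist : ‖w - wstar‖ ≤ ε / (α * L + ε) * (⨅ j, |wstar j|)) :
    ∀ j : Fin d, α * |g w j| ≤ ε * |w j| := by
  intro j
  have hden : 0 < α * L + ε := by positivity
  set m : ℝ := ⨅ j, |wstar j| with hm
  haveI : Nonempty (Fin d) := ⟨⟨0, hd⟩⟩
  have hm_le : ∀ i : Fin d, m ≤ |wstar i| := fun i =>
    ciInf_le (Set.Finite.bddBelow (Set.finite_range _)) i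
  have hm0 : 0 ≤ m := le_ciInf fun i => abs_nonneg _
  have hgw : ‖g w‖ ≤ L * ‖w - wstar‖ := by
    have := hg w wstar
    rwa [hgstar, sub_zero] at this
  have hcoord : |g w j| ≤ ‖g w‖ := abs_coord_le_norm' _ j
  have hwj : |(w - wstar) j| ≤ ‖w - wstar‖ := abs_coord_le_norm' _ j
  have hsub : (w - wstar) j = w j - wstar j := rfl
  have hlow : α * L / (α * L + ε) * m ≤ |w j| := by
    have h1 : |wstar j| - |w j| ≤ |w j - wstar j| := by
      have := abs_sub_abs_le_abs_sub (wstar j) (w j)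
      rwa [abs_sub_comm] at this
    have h2 : |w j - wstar j| ≤ ε / (α * L + ε) * m := by
      rw [← hsub]; exact hwj.trans hdist
    have h3 : m - ε / (α * L + ε) * m ≤ |w j| := by
      have := hm_le j
      linarith
    have h4 : m - ε / (α * L + ε) * m = α * L / (α * L + ε) * m := by
      field_simp
      ring
    linarith [h4 ▸ h3]
  have hup : α * |g w j| ≤ α * L * (ε / (α * L + ε) * m) := by
    have : |g w j| ≤ L * (ε / (α * L + ε) * m) :=
      hcoord.trans (hgw.trans (by nlinarith))
    nlinarith
  have key : α * L * (ε / (α * L + ε) * m) = ε * (α * L / (α * L + ε) * m) := by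
    ring
  calc α * |g w j| ≤ α * L * (ε / (α * L + ε) * m) := hup
    _ = ε * (α * L / (α * L + ε) * m) := key
    _ ≤ ε * |w j| := by nlinarith
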